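/- For every integer n ≥ 1: the number of flattened Catalan words of length n with no valley equals (n − 1)·2^(n−2) + 1 when n ≥ 2 (and equals 1 when n = 1); and for every integer k ≥ 1 with n ≥ 2k + 2, the number of flattened Catalan words of length n with exactly k valleys equals 2^(n − 2k − 2) · C(n − 1, 2k + 1), where C denotes the binomial coefficient, this number being 0 when n < 2k + 2. -/

import Mathlib

/-- `w : ℕ → ℕ` encodes a Catalan word of length `n` (0-indexed letters
`w 0, w 1, …, w (n-1)`): the first letter is `0`, each letter is at most the
previous one plus one, and `w` is normalized to vanish at positions `≥ n`. -/
def IsCatalanWord (n : ℕ) (w : ℕ → ℕ) : Prop :=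
  w 0 = 0 ∧ (∀ i, i + 1 < n → w (i + 1) ≤ w i + 1) ∧ ∀ i, n ≤ i → w i = 0

/-- `j` is the starting position of one of the maximal weakly increasing
contiguous subwords (runs of weak ascents) of the length-`n` word `w`. -/
def IsRunStart (n : ℕ) (w : ℕ → ℕ) (j : ℕ) : Prop :=
  j < n ∧ (j = 0 ∨ w j < w (j - 1))

/-- A word is flattened when the leading terms of its maximal weakly increasing
contiguous subwords, read from left to right, form a weakly increasing sequence. -/
def IsFlattened (n : ℕ) (w : ℕ → ℕ) : Prop :=
  ∀ i j, IsRunStart n w i → IsRunStart n w j → i ≤ j → w i ≤ w j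

/-- The set of flattened Catalan words of length `n`. -/
def FlatCat (n : ℕ) : Set (ℕ → ℕ) := {w | IsCatalanWord n w ∧ IsFlattened n w}

/-- Number of maximal strictly increasing contiguous subwords (runs of ascents):
`1 + #{ i : w_i ≥ w_{i+1} }`. -/
noncomputable def runsAsc (n : ℕ) (w : ℕ → ℕ) : ℕ :=
  1 + {i : ℕ | i + 1 < n ∧ w (i + 1) ≤ w i}.ncard

/-- Number of maximal weakly increasing contiguous subwords (runs of weak
ascents): `1 + #{ i : w_i > w_{i+1} }`. -/
noncomputable def wruns (n : ℕ) (w : ℕ → ℕ) : ℕ :=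
  1 + {i : ℕ | i + 1 < n ∧ w (i + 1) < w i}.ncard

/-- Number of maximal strictly decreasing contiguous subwords (runs of
descents): `1 + #{ i : w_i ≤ w_{i+1} }`. -/
noncomputable def runsDesc (n : ℕ) (w : ℕ → ℕ) : ℕ :=
  1 + {i : ℕ | i + 1 < n ∧ w i ≤ w (i + 1)}.ncard

/-- Number of maximal weakly decreasing contiguous subwords (runs of weak
descents): `1 + #{ i : w_i < w_{i+1} }`. -/
noncomputable def wrunsDesc (n : ℕ) (w : ℕ → ℕ) : ℕ :=
  1 + {i : ℕ | i + 1 < n ∧ w i < w (i + 1)}.ncard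

/-- An `ℓ`-valley `a b^ℓ (b+1)` (with `a > b`) occurring at position `i` of the
length-`n` word `w`. -/
def IsLValley (n : ℕ) (w : ℕ → ℕ) (ℓ i : ℕ) : Prop :=
  i + ℓ + 1 < n ∧ w (i + 1) < w i ∧ (∀ t, 1 ≤ t → t ≤ ℓ → w (i + t) = w (i + 1)) ∧
    w (i + ℓ + 1) = w (i + 1) + 1

/-- Number of `ℓ`-valleys of `w`. -/
noncomputable def lValleyCount (n : ℕ) (w : ℕ → ℕ) (ℓ : ℕ) : ℕ :=
  {i : ℕ | IsLValley n w ℓ i}.ncard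

/-- Number of valleys of `w` (all `ℓ`-valleys, `ℓ ≥ 1`). -/
noncomputable def valleyCount (n : ℕ) (w : ℕ → ℕ) : ℕ :=
  {p : ℕ × ℕ | 1 ≤ p.2 ∧ IsLValley n w p.2 p.1}.ncard

/-- A symmetric valley `a (a-1)^ℓ a` (with `ℓ ≥ 1`) occurring at position `i`. -/
def IsSymValley (n : ℕ) (w : ℕ → ℕ) (ℓ i : ℕ) : Prop :=
  i + ℓ + 1 < n ∧ w i = w (i + 1) + 1 ∧ (∀ t, 1 ≤ t → t ≤ ℓ → w (i + t) = w (i + 1)) ∧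
    w (i + ℓ + 1) = w i

/-- Number of symmetric valleys of `w` (over all `ℓ ≥ 1`). -/
noncomputable def symValleyCount (n : ℕ) (w : ℕ → ℕ) : ℕ :=
  {p : ℕ × ℕ | 1 ≤ p.2 ∧ IsSymValley n w p.2 p.1}.ncard

/-- An `ℓ`-peak `a (a+1)^ℓ b` (with `a ≥ b`) occurring at position `i` of the
length-`n` word `w`. -/
def IsLPeak (n : ℕ) (w : ℕ → ℕ) (ℓ i : ℕ) : Prop :=
  i + ℓ + 1 < n ∧ (∀ t, 1 ≤ t → t ≤ ℓ → w (i + t) = w i + 1) ∧ w (i + ℓ + 1) ≤ w i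

/-- Number of `ℓ`-peaks of `w`. -/
noncomputable def lPeakCount (n : ℕ) (w : ℕ → ℕ) (ℓ : ℕ) : ℕ :=
  {i : ℕ | IsLPeak n w ℓ i}.ncard

/-- Number of peaks of `w` (all `ℓ`-peaks, `ℓ ≥ 1`). -/
noncomputable def peakCount (n : ℕ) (w : ℕ → ℕ) : ℕ :=
  {p : ℕ × ℕ | 1 ≤ p.2 ∧ IsLPeak n w p.2 p.1}.ncard

/-- A symmetric peak `a (a+1)^ℓ a` (with `ℓ ≥ 1`) occurring at position `i`. -/
def IsSymPeak (n : ℕ) (w : ℕ → ℕ) (ℓ i : ℕ) : Prop :=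
  i + ℓ + 1 < n ∧ (∀ t, 1 ≤ t → t ≤ ℓ → w (i + t) = w i + 1) ∧ w (i + ℓ + 1) = w i

/-- Number of symmetric peaks of `w` (over all `ℓ ≥ 1`). -/
noncomputable def symPeakCount (n : ℕ) (w : ℕ → ℕ) : ℕ :=
  {p : ℕ × ℕ | 1 ≤ p.2 ∧ IsSymPeak n w p.2 p.1}.ncard

section Aux
open Classical Finset

noncomputable section

/-- the "last run" statistic: max value at a run start -/
def mstat (n : ℕ) (w : ℕ → ℕ) : ℕ :=
  (Finset.range n).sup (fun j => if IsRunStart n w j then w j else 0)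

/-- distance from last letter down to the max run-start value -/
def jstat (n : ℕ) (w : ℕ → ℕ) : ℕ := w (n-1) - mstat n w

/-- extension of a length-`n` word by a letter `c` -/
def extw (n : ℕ) (w : ℕ → ℕ) (c : ℕ) : ℕ → ℕ :=
  fun i => if i < n then w i else if i = n then c else 0

/-- the word ends with a (maximal) constant block immediately preceded by a descent -/
def EndFlag (n : ℕ) (w : ℕ → ℕ) : Prop :=
  ∃ i, i + 1 < n ∧ w (i+1) < w i ∧ ∀ t, i < t → t < n → w t = w (i+1)

def S0 (n k : ℕ) : Set (ℕ → ℕ) := {w | w ∈ FlatCat n ∧ valleyCount n w = k ∧ ¬ EndFlag n w}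
def S1 (n k : ℕ) : Set (ℕ → ℕ) := {w | w ∈ FlatCat n ∧ valleyCount n w = k ∧ EndFlag n w}

lemma catalan_le {n : ℕ} {w : ℕ → ℕ} (hw : IsCatalanWord n w) : ∀ i, i < n → w i ≤ i := by
  intro i
  induction i with
  | zero => intro _; simp [hw.1]
  | succ i ih =>
    intro h
    have := hw.2.1 i h
    have := ih (by omega)
    omega

lemma flatCat_finite (n : ℕ) : (FlatCat n).Finite := by
  classical
  have h : FlatCat n ⊆ Set.range (fun (g : Fin n → Fin (n+1)) (i : ℕ) =>
      if h : i < n then (g ⟨i, h⟩ : ℕ) else 0) := by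
    intro w hw
    refine ⟨fun j => ⟨w j, by have := catalan_le hw.1 j j.2; omega⟩, ?_⟩
    funext i
    by_cases h : i < n
    · simp [h]
    · simp [h, hw.1.2.2 i (by omega)]
  exact (Set.finite_range _).subset h

lemma S0_finite (n k : ℕ) : (S0 n k).Finite :=
  (flatCat_finite n).subset (fun w hw => hw.1)
lemma S1_finite (n k : ℕ) : (S1 n k).Finite :=
  (flatCat_finite n).subset (fun w hw => hw.1)

lemma valleySet_finite (n : ℕ) (w : ℕ → ℕ) :
    {p : ℕ × ℕ | 1 ≤ p.2 ∧ IsLValley n w p.2 p.1}.Finite := by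
  apply (Finset.range n ×ˢ Finset.range n).finite_toSet.subset
  rintro ⟨i, l⟩ ⟨h1, h2, -⟩
  simp only [Finset.coe_product, Set.mem_prod, Finset.mem_coe, Finset.mem_range]
  exact ⟨by omega, by omega⟩

end
end Aux
section Aux2
open Classical Finset

lemma ext_lt {n : ℕ} {w : ℕ → ℕ} {c i : ℕ} (h : i < n) : extw n w c i = w i := if_pos h

lemma ext_self {n : ℕ} {w : ℕ → ℕ} {c : ℕ} : extw n w c n = c := by
  unfold extw; rw [if_neg (by omega), if_pos rfl]

lemma ext_gt {n : ℕ} {w : ℕ → ℕ} {c i : ℕ} (h : n < i) : extw n w c i = 0 := by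
  unfold extw; rw [if_neg (by omega), if_neg (by omega)]

lemma isRunStart_ext_iff {n : ℕ} (hn : 1 ≤ n) {w : ℕ → ℕ} {c j : ℕ} :
    IsRunStart (n+1) (extw n w c) j ↔ (IsRunStart n w j ∨ (j = n ∧ c < w (n-1))) := by
  unfold IsRunStart
  rcases Nat.lt_trichotomy j n with hj | rfl | hj
  · rw [ext_lt hj, ext_lt (show j - 1 < n by omega)]
    constructor
    · rintro ⟨-, h2⟩; exact Or.inl ⟨hj, h2⟩
    · rintro (⟨-, h2⟩ | ⟨h, -⟩)
      · exact ⟨by omega, h2⟩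
      · omega
  · rw [ext_self, ext_lt (show j - 1 < j by omega)]
    constructor
    · rintro ⟨-, h2 | h2⟩
      · omega
      · exact Or.inr ⟨rfl, h2⟩
    · rintro (⟨h, -⟩ | ⟨-, h⟩)
      · omega
      · exact ⟨by omega, Or.inr h⟩
  · constructor
    · rintro ⟨h, -⟩; omega
    · rintro (⟨h, -⟩ | ⟨h, -⟩) <;> omega

lemma runStart_le {n : ℕ} {w : ℕ → ℕ} (hf : IsFlattened n w) {j : ℕ} (hj : IsRunStart n w j) :
    ∀ m, j ≤ m → m < n → w j ≤ w m := by
  intro m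
  induction m with
  | zero =>
    intro h1 _
    have : j = 0 := by omega
    rw [this]
  | succ m ih =>
    intro h1 h2
    rcases Nat.eq_or_lt_of_le h1 with h | h1'
    · rw [h]
    · rcases Nat.lt_or_ge (w (m+1)) (w m) with h | h
      · exact hf j (m+1) hj ⟨h2, Or.inr (by simpa using h)⟩ h1
      · exact le_trans (ih (by omega) (by omega)) h

lemma le_mstat {n : ℕ} {w : ℕ → ℕ} {j : ℕ} (hj : IsRunStart n w j) : w j ≤ mstat n w := by
  have h := Finset.le_sup (f := fun j => if IsRunStart n w j then w j else 0)
    (Finset.mem_range.2 hj.1)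
  simp only [hj, if_true, ite_true] at h; exact h

lemma mstat_le_last {n : ℕ} (hn : 1 ≤ n) {w : ℕ → ℕ} (hf : IsFlattened n w) :
    mstat n w ≤ w (n-1) := by
  apply Finset.sup_le
  intro j hj
  rw [Finset.mem_range] at hj
  split_ifs with h
  · exact runStart_le hf h (n-1) (by omega) (by omega)
  · exact Nat.zero_le _

lemma ext_mem_flatCat {n : ℕ} (hn : 1 ≤ n) {w : ℕ → ℕ} (hw : w ∈ FlatCat n) {c : ℕ}
    (hc1 : c ≤ w (n-1) + 1) (hc2 : c < w (n-1) → mstat n w ≤ c) :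
    extw n w c ∈ FlatCat (n+1) := by
  obtain ⟨⟨h0, hstep, hnorm⟩, hflat⟩ := hw
  refine ⟨⟨?_, ?_, ?_⟩, ?_⟩
  · rw [ext_lt hn]; exact h0
  · intro i hi
    rcases Nat.lt_trichotomy (i+1) n with h | h | h
    · rw [ext_lt h, ext_lt (by omega)]; exact hstep i h
    · rw [h, ext_self, ext_lt (by omega : i < n)]
      have hieq : i = n - 1 := by omega
      rw [hieq]; exact hc1
    · omega
  · intro i hi; exact ext_gt (by omega)
  · intro i j hi hj hij
    rw [isRunStart_ext_iff hn] at hi hj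
    rcases hi with hi | ⟨rfl, hci⟩
    · rcases hj with hj | ⟨rfl, hcj⟩
      · rw [ext_lt hi.1, ext_lt hj.1]; exact hflat i j hi hj hij
      · rw [ext_lt hi.1, ext_self]
        exact le_trans (le_mstat hi) (hc2 hcj)
    · rcases hj with hj | ⟨rfl, hcj⟩
      · have := hj.1; omega
      · exact le_refl _

def trunc (n : ℕ) (w : ℕ → ℕ) : ℕ → ℕ := fun i => if i < n then w i else 0

lemma trunc_lt {n : ℕ} {w : ℕ → ℕ} {i : ℕ} (h : i < n) : trunc n w i = w i := if_pos h

lemma isRunStart_trunc_iff {n : ℕ} {v : ℕ → ℕ} {j : ℕ} :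
    IsRunStart n (trunc n v) j ↔ (j < n ∧ (j = 0 ∨ v j < v (j-1))) := by
  unfold IsRunStart
  constructor
  · rintro ⟨h1, h2⟩
    refine ⟨h1, ?_⟩
    rwa [trunc_lt h1, trunc_lt (by omega)] at h2
  · rintro ⟨h1, h2⟩
    refine ⟨h1, ?_⟩
    rwa [trunc_lt h1, trunc_lt (by omega)]

lemma mem_flatCat_succ {n : ℕ} (hn : 1 ≤ n) {v : ℕ → ℕ} (hv : v ∈ FlatCat (n+1)) :
    trunc n v ∈ FlatCat n ∧ v = extw n (trunc n v) (v n) ∧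
      v n ≤ trunc n v (n-1) + 1 ∧
      (v n < trunc n v (n-1) → mstat n (trunc n v) ≤ v n) := by
  obtain ⟨⟨h0, hstep, hnorm⟩, hflat⟩ := hv
  have hlast : trunc n v (n-1) = v (n-1) := trunc_lt (by omega)
  have hmem : trunc n v ∈ FlatCat n := by
    refine ⟨⟨?_, ?_, ?_⟩, ?_⟩
    · rw [trunc_lt hn]; exact h0
    · intro i hi
      rw [trunc_lt hi, trunc_lt (by omega)]
      exact hstep i (by omega)
    · intro i hi; exact if_neg (by omega)
    · intro i j hi hj hij
      rw [isRunStart_trunc_iff] at hi hj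
      rw [trunc_lt hi.1, trunc_lt hj.1]
      exact hflat i j ⟨by omega, hi.2⟩ ⟨by omega, hj.2⟩ hij
  refine ⟨hmem, ?_, ?_, ?_⟩
  · funext i
    rcases Nat.lt_trichotomy i n with h | rfl | h
    · rw [ext_lt h, trunc_lt h]
    · rw [ext_self]
    · rw [ext_gt h, hnorm i (by omega)]
  · rw [hlast]
    have h := hstep (n-1) (by omega)
    rwa [Nat.sub_add_cancel hn] at h
  · rw [hlast]
    intro hdesc
    apply Finset.sup_le
    intro j hj
    rw [Finset.mem_range] at hj
    split_ifs with h
    · rw [isRunStart_trunc_iff] at h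
      rw [trunc_lt hj]
      exact hflat j n ⟨by omega, h.2⟩ ⟨by omega, Or.inr (by simpa using hdesc)⟩ (by omega)
    · exact Nat.zero_le _

end Aux2
section Aux3
open Classical Finset

lemma endFlag_wit_unique {n : ℕ} {w : ℕ → ℕ} {i1 i2 : ℕ}
    (h1 : i1 + 1 < n ∧ w (i1+1) < w i1 ∧ ∀ t, i1 < t → t < n → w t = w (i1+1))
    (h2 : i2 + 1 < n ∧ w (i2+1) < w i2 ∧ ∀ t, i2 < t → t < n → w t = w (i2+1)) :
    i1 = i2 := by
  by_contra hne
  rcases Nat.lt_or_ge i1 i2 with h | h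
  · have e1 := h1.2.2 i2 h (by omega)
    have e2 := h1.2.2 (i2+1) (by omega) h2.1
    have := h2.2.1
    omega
  · have h' : i2 < i1 := by omega
    have e1 := h2.2.2 i1 h' (by omega)
    have e2 := h2.2.2 (i1+1) (by omega) h1.1
    have := h1.2.1
    omega

lemma endFlag_ext_U {n : ℕ} (hn : 1 ≤ n) {w : ℕ → ℕ} :
    ¬ EndFlag (n+1) (extw n w (w (n-1) + 1)) := by
  rintro ⟨i, hi, hdesc, hpl⟩
  rcases Nat.lt_trichotomy (i+1) n with h | h | h
  · have e1 := hpl n (by omega) (by omega)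
    have e2 := hpl (n-1) (by omega) (by omega)
    rw [ext_self, ext_lt h] at e1
    rw [ext_lt (by omega), ext_lt h] at e2
    omega
  · rw [show i+1 = n from h, ext_self, ext_lt (by omega : i < n)] at hdesc
    have hieq : i = n-1 := by omega
    rw [hieq] at hdesc
    omega
  · omega

lemma endFlag_ext_H {n : ℕ} (hn : 1 ≤ n) {w : ℕ → ℕ} :
    EndFlag (n+1) (extw n w (w (n-1))) ↔ EndFlag n w := by
  constructor
  · rintro ⟨i, hi, hdesc, hpl⟩
    rcases Nat.lt_trichotomy (i+1) n with h | h | h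
    · refine ⟨i, h, ?_, ?_⟩
      · rwa [ext_lt h, ext_lt (by omega)] at hdesc
      · intro t ht1 ht2
        have := hpl t ht1 (by omega)
        rwa [ext_lt (by omega), ext_lt h] at this
    · exfalso
      rw [show i+1 = n from h, ext_self, ext_lt (by omega : i < n)] at hdesc
      have hieq : i = n-1 := by omega
      rw [hieq] at hdesc
      omega
    · omega
  · rintro ⟨i, hi, hdesc, hpl⟩
    refine ⟨i, by omega, ?_, ?_⟩
    · rwa [ext_lt (by omega), ext_lt (by omega)]
    · intro t ht1 ht2
      rw [ext_lt hi]
      rcases Nat.lt_trichotomy t n with h | h | h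
      · rw [ext_lt h]; exact hpl t ht1 h
      · rw [h, ext_self]
        exact hpl (n-1) (by omega) (by omega)
      · omega

lemma endFlag_ext_D {n : ℕ} (hn : 1 ≤ n) {w : ℕ → ℕ} {c : ℕ} (hc : c < w (n-1)) :
    EndFlag (n+1) (extw n w c) := by
  refine ⟨n-1, by omega, ?_, ?_⟩
  · rw [show n-1+1 = n by omega, ext_self, ext_lt (by omega)]
    exact hc
  · intro t ht1 ht2
    have ht : t = n := by omega
    rw [ht, show n-1+1 = n by omega]

lemma jstat_eq_zero_of_endFlag {n : ℕ} (hn : 1 ≤ n) {w : ℕ → ℕ} (hw : w ∈ FlatCat n)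
    (hf : EndFlag n w) : jstat n w = 0 := by
  obtain ⟨i, hi, hdesc, hpl⟩ := hf
  have hrs : IsRunStart n w (i+1) := ⟨hi, Or.inr (by simpa using hdesc)⟩
  have h1 : w (i+1) ≤ mstat n w := le_mstat hrs
  have h2 : w (n-1) = w (i+1) := hpl (n-1) (by omega) (by omega)
  have h3 := mstat_le_last hn hw.2
  unfold jstat
  omega

lemma mstat_ext_of_ge {n : ℕ} (hn : 1 ≤ n) {w : ℕ → ℕ} {c : ℕ} (hc : ¬ c < w (n-1)) :
    mstat (n+1) (extw n w c) = mstat n w := by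
  unfold mstat
  rw [Finset.range_add_one, Finset.sup_insert, if_neg (fun h => by
    rcases (isRunStart_ext_iff hn).1 h with ⟨h', -⟩ | ⟨-, h'⟩
    · omega
    · exact hc h')]
  rw [sup_eq_right.2 (Nat.zero_le _)]
  apply Finset.sup_congr rfl
  intro j hj
  rw [Finset.mem_range] at hj
  by_cases h : IsRunStart n w j
  · rw [if_pos ((isRunStart_ext_iff hn).2 (Or.inl h)), if_pos h, ext_lt hj]
  · rw [if_neg, if_neg h]
    intro h'
    rcases (isRunStart_ext_iff hn).1 h' with h'' | ⟨h'', -⟩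
    · exact h h''
    · omega

lemma mstat_ext_D {n : ℕ} (hn : 1 ≤ n) {w : ℕ → ℕ} {c : ℕ} (hc : c < w (n-1))
    (hm : mstat n w ≤ c) : mstat (n+1) (extw n w c) = c := by
  unfold mstat
  rw [Finset.range_add_one, Finset.sup_insert,
    if_pos ((isRunStart_ext_iff hn).2 (Or.inr ⟨rfl, hc⟩)), ext_self, sup_eq_left]
  apply Finset.sup_le
  intro j hj
  rw [Finset.mem_range] at hj
  by_cases h : IsRunStart n w j
  · rw [if_pos ((isRunStart_ext_iff hn).2 (Or.inl h)), ext_lt hj]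
    exact le_trans (le_mstat h) hm
  · rw [if_neg]
    · exact Nat.zero_le _
    · intro h'
      rcases (isRunStart_ext_iff hn).1 h' with h'' | ⟨h'', -⟩
      · exact h h''
      · omega

lemma jstat_ext_H {n : ℕ} (hn : 1 ≤ n) {w : ℕ → ℕ} :
    jstat (n+1) (extw n w (w (n-1))) = jstat n w := by
  unfold jstat
  rw [Nat.add_sub_cancel, ext_self, mstat_ext_of_ge hn (by omega)]

lemma jstat_ext_U {n : ℕ} (hn : 1 ≤ n) {w : ℕ → ℕ} (hw : w ∈ FlatCat n) :
    jstat (n+1) (extw n w (w (n-1) + 1)) = jstat n w + 1 := by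
  unfold jstat
  rw [Nat.add_sub_cancel, ext_self, mstat_ext_of_ge hn (by omega)]
  have := mstat_le_last hn hw.2
  omega

lemma jstat_ext_D {n : ℕ} (hn : 1 ≤ n) {w : ℕ → ℕ} {c : ℕ} (hc : c < w (n-1))
    (hm : mstat n w ≤ c) : jstat (n+1) (extw n w c) = 0 := by
  unfold jstat
  rw [Nat.add_sub_cancel, ext_self, mstat_ext_D hn hc hm]
  omega

lemma extw_inj {n : ℕ} {w v : ℕ → ℕ} {c d : ℕ} (hw : w ∈ FlatCat n) (hv : v ∈ FlatCat n)
    (h : extw n w c = extw n v d) : w = v ∧ c = d := by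
  constructor
  · funext i
    rcases Nat.lt_or_ge i n with hi | hi
    · have hh := congrFun h i
      rwa [ext_lt hi, ext_lt hi] at hh
    · rw [hw.1.2.2 i hi, hv.1.2.2 i hi]
  · have hh := congrFun h n
    rwa [ext_self, ext_self] at hh

lemma isLValley_ext_low {n : ℕ} {w : ℕ → ℕ} {c l i : ℕ} (h : i + l + 1 < n) :
    IsLValley (n+1) (extw n w c) l i ↔ IsLValley n w l i := by
  unfold IsLValley
  rw [ext_lt (by omega : i < n), ext_lt (by omega : i+1 < n), ext_lt (by omega : i+l+1 < n)]
  constructor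
  · rintro ⟨-, h2, h3, h4⟩
    refine ⟨h, h2, ?_, h4⟩
    intro t ht1 ht2
    have hh := h3 t ht1 ht2
    rwa [ext_lt (by omega)] at hh
  · rintro ⟨-, h2, h3, h4⟩
    refine ⟨by omega, h2, ?_, h4⟩
    intro t ht1 ht2
    rw [ext_lt (by omega)]
    exact h3 t ht1 ht2

lemma valleySet_ext_le {n : ℕ} (hn : 1 ≤ n) {w : ℕ → ℕ} {c : ℕ} (hc : c ≤ w (n-1)) :
    {p : ℕ × ℕ | 1 ≤ p.2 ∧ IsLValley (n+1) (extw n w c) p.2 p.1}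
      = {p : ℕ × ℕ | 1 ≤ p.2 ∧ IsLValley n w p.2 p.1} := by
  ext ⟨i, l⟩
  simp only [Set.mem_setOf_eq]
  constructor
  · rintro ⟨hl, hv⟩
    refine ⟨hl, ?_⟩
    rcases Nat.lt_or_ge (i + l + 1) n with h | h
    · exact (isLValley_ext_low h).1 hv
    · exfalso
      obtain ⟨h1, h2, h3, h4⟩ := hv
      have hin : i + l + 1 = n := by omega
      have e3 := h3 l hl (le_refl l)
      rw [ext_lt (by omega : i + l < n), ext_lt (by omega : i + 1 < n)] at e3
      rw [hin, ext_self, ext_lt (by omega : i + 1 < n)] at h4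
      have hl2 : i + l = n - 1 := by omega
      rw [hl2] at e3
      omega
  · rintro ⟨hl, hv⟩
    exact ⟨hl, (isLValley_ext_low hv.1).2 hv⟩

lemma valleyCount_ext_le {n : ℕ} (hn : 1 ≤ n) {w : ℕ → ℕ} {c : ℕ} (hc : c ≤ w (n-1)) :
    valleyCount (n+1) (extw n w c) = valleyCount n w := by
  unfold valleyCount
  rw [valleySet_ext_le hn hc]

lemma valleySet_ext_U_flagwit {n : ℕ} (hn : 1 ≤ n) {w : ℕ → ℕ} {i l : ℕ}
    (hl : 1 ≤ l) (hv : IsLValley (n+1) (extw n w (w (n-1)+1)) l i) (hin : i + l + 1 = n) :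
    i + 1 < n ∧ w (i+1) < w i ∧ ∀ t, i < t → t < n → w t = w (i+1) := by
  obtain ⟨h1, h2, h3, h4⟩ := hv
  rw [ext_lt (by omega : i + 1 < n), ext_lt (by omega : i < n)] at h2
  refine ⟨by omega, h2, ?_⟩
  intro t ht1 ht2
  have hh := h3 (t - i) (by omega) (by omega)
  rw [show i + (t - i) = t by omega, ext_lt (by omega : t < n),
    ext_lt (by omega : i + 1 < n)] at hh
  exact hh

lemma valleySet_ext_U_noflag {n : ℕ} (hn : 1 ≤ n) {w : ℕ → ℕ} (hnf : ¬ EndFlag n w) :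
    {p : ℕ × ℕ | 1 ≤ p.2 ∧ IsLValley (n+1) (extw n w (w (n-1)+1)) p.2 p.1}
      = {p : ℕ × ℕ | 1 ≤ p.2 ∧ IsLValley n w p.2 p.1} := by
  ext ⟨i, l⟩
  simp only [Set.mem_setOf_eq]
  constructor
  · rintro ⟨hl, hv⟩
    refine ⟨hl, ?_⟩
    rcases Nat.lt_or_ge (i + l + 1) n with h | h
    · exact (isLValley_ext_low h).1 hv
    · exfalso
      have hin : i + l + 1 = n := by
        have := hv.1
        omega
      exact hnf ⟨i, valleySet_ext_U_flagwit hn hl hv hin⟩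
  · rintro ⟨hl, hv⟩
    exact ⟨hl, (isLValley_ext_low hv.1).2 hv⟩

lemma valleySet_ext_U_flag {n : ℕ} (hn : 1 ≤ n) {w : ℕ → ℕ} {i0 : ℕ}
    (h0 : i0 + 1 < n ∧ w (i0+1) < w i0 ∧ ∀ t, i0 < t → t < n → w t = w (i0+1)) :
    {p : ℕ × ℕ | 1 ≤ p.2 ∧ IsLValley (n+1) (extw n w (w (n-1)+1)) p.2 p.1}
      = insert (i0, n - 1 - i0) {p : ℕ × ℕ | 1 ≤ p.2 ∧ IsLValley n w p.2 p.1} := by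
  ext ⟨i, l⟩
  simp only [Set.mem_setOf_eq, Set.mem_insert_iff, Prod.mk.injEq]
  constructor
  · rintro ⟨hl, hv⟩
    rcases Nat.lt_or_ge (i + l + 1) n with h | h
    · exact Or.inr ⟨hl, (isLValley_ext_low h).1 hv⟩
    · have hin : i + l + 1 = n := by
        have := hv.1
        omega
      have hwit := valleySet_ext_U_flagwit hn hl hv hin
      have : i = i0 := endFlag_wit_unique hwit h0
      exact Or.inl ⟨this, by omega⟩
  · rintro (⟨heq1, heq2⟩ | ⟨hl, hv⟩)
    · subst heq1
      subst heq2
      have hi1 := h0.1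
      refine ⟨by omega, ?_, ?_, ?_, ?_⟩
      · omega
      · rw [ext_lt (by omega : i + 1 < n), ext_lt (by omega : i < n)]
        exact h0.2.1
      · intro t ht1 ht2
        rw [ext_lt (by omega : i + t < n), ext_lt (by omega : i + 1 < n)]
        exact h0.2.2 (i + t) (by omega) (by omega)
      · rw [show i + (n - 1 - i) + 1 = n by omega, ext_self,
          ext_lt (by omega : i + 1 < n)]
        rw [h0.2.2 (n-1) (by omega) (by omega)]
    · exact ⟨hl, (isLValley_ext_low hv.1).2 hv⟩

lemma valleyCount_ext_U {n : ℕ} (hn : 1 ≤ n) {w : ℕ → ℕ} :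
    valleyCount (n+1) (extw n w (w (n-1)+1)) =
      valleyCount n w + (if EndFlag n w then 1 else 0) := by
  by_cases hf : EndFlag n w
  · obtain ⟨i0, h0⟩ := hf
    rw [if_pos ⟨i0, h0⟩]
    unfold valleyCount
    rw [valleySet_ext_U_flag hn h0]
    rw [Set.ncard_insert_of_notMem ?nm (valleySet_finite n w)]
    case nm =>
      rintro ⟨-, hv⟩
      have h1 := hv.1
      have := h0.1
      omega
  · rw [if_neg hf]
    unfold valleyCount
    rw [valleySet_ext_U_noflag hn hf]
    exact (Nat.add_zero _).symm

end Aux3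
section Aux4
open Classical Finset

noncomputable section

def SFlat (n : ℕ) : Finset (ℕ → ℕ) := (flatCat_finite n).toFinset

def SF0 (n k : ℕ) : Finset (ℕ → ℕ) :=
  (SFlat n).filter (fun w => valleyCount n w = k ∧ ¬ EndFlag n w)
def SF1 (n k : ℕ) : Finset (ℕ → ℕ) :=
  (SFlat n).filter (fun w => valleyCount n w = k ∧ EndFlag n w)
def SF1e (n k : ℕ) : Finset (ℕ → ℕ) :=
  (SFlat n).filter (fun w => valleyCount n w + 1 = k ∧ EndFlag n w)
def SF01 (n k : ℕ) : Finset (ℕ → ℕ) :=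
  (SFlat n).filter (fun w => valleyCount n w = k)

def EU (n : ℕ) (w : ℕ → ℕ) : ℕ → ℕ := extw n w (w (n-1) + 1)
def EH (n : ℕ) (w : ℕ → ℕ) : ℕ → ℕ := extw n w (w (n-1))

lemma mem_SFlat {n : ℕ} {w : ℕ → ℕ} : w ∈ SFlat n ↔ w ∈ FlatCat n := by
  simp [SFlat, Set.Finite.mem_toFinset]

lemma mem_SF0 {n k : ℕ} {w : ℕ → ℕ} :
    w ∈ SF0 n k ↔ w ∈ FlatCat n ∧ valleyCount n w = k ∧ ¬ EndFlag n w := by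
  simp [SF0, mem_SFlat, Finset.mem_filter, and_assoc]

lemma mem_SF1 {n k : ℕ} {w : ℕ → ℕ} :
    w ∈ SF1 n k ↔ w ∈ FlatCat n ∧ valleyCount n w = k ∧ EndFlag n w := by
  simp [SF1, mem_SFlat, Finset.mem_filter, and_assoc]

lemma mem_SF1e {n k : ℕ} {w : ℕ → ℕ} :
    w ∈ SF1e n k ↔ w ∈ FlatCat n ∧ valleyCount n w + 1 = k ∧ EndFlag n w := by
  simp [SF1e, mem_SFlat, Finset.mem_filter, and_assoc]

lemma mem_SF01 {n k : ℕ} {w : ℕ → ℕ} :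
    w ∈ SF01 n k ↔ w ∈ FlatCat n ∧ valleyCount n w = k := by
  simp [SF01, mem_SFlat, Finset.mem_filter]

lemma SF1e_zero (n : ℕ) : SF1e n 0 = ∅ := by
  ext w
  simp [mem_SF1e]

lemma SF1e_succ (n k : ℕ) : SF1e n (k+1) = SF1 n k := by
  ext w
  simp only [mem_SF1e, mem_SF1]
  constructor
  · rintro ⟨h1, h2, h3⟩; exact ⟨h1, by omega, h3⟩
  · rintro ⟨h1, h2, h3⟩; exact ⟨h1, by omega, h3⟩

lemma SF01_card (n k : ℕ) : (SF01 n k).card = (SF0 n k).card + (SF1 n k).card := by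
  have h0 : SF0 n k = (SF01 n k).filter (fun w => ¬ EndFlag n w) := by
    ext w
    simp [mem_SF0, SF01, Finset.mem_filter, mem_SFlat, and_assoc]
  have h1 : SF1 n k = (SF01 n k).filter (fun w => EndFlag n w) := by
    ext w
    simp [mem_SF1, SF01, Finset.mem_filter, mem_SFlat, and_assoc]
  rw [h0, h1, Nat.add_comm]
  exact (Finset.card_filter_add_card_filter_not _).symm

lemma SF01_sum (n k : ℕ) (hn : 1 ≤ n) :
    ∑ w ∈ SF01 n k, jstat n w = ∑ w ∈ SF0 n k, jstat n w := by
  have h0 : SF0 n k = (SF01 n k).filter (fun w => ¬ EndFlag n w) := by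
    ext w
    simp [mem_SF0, SF01, Finset.mem_filter, mem_SFlat, and_assoc]
  have h1 : SF1 n k = (SF01 n k).filter (fun w => EndFlag n w) := by
    ext w
    simp [mem_SF1, SF01, Finset.mem_filter, mem_SFlat, and_assoc]
  rw [← Finset.sum_filter_add_sum_filter_not (SF01 n k) (fun w => EndFlag n w), ← h0, ← h1]
  have hz : ∑ w ∈ SF1 n k, jstat n w = 0 := by
    apply Finset.sum_eq_zero
    intro w hw
    rw [mem_SF1] at hw
    exact jstat_eq_zero_of_endFlag hn hw.1 hw.2.2
  rw [hz, Nat.zero_add]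

-- injectivity helpers
lemma EU_injOn {n k : ℕ} : ∀ w ∈ SF0 n k ∪ SF1e n k, ∀ v ∈ SF0 n k ∪ SF1e n k,
    EU n w = EU n v → w = v := by
  intro w hw v hv h
  have hw' : w ∈ FlatCat n := by
    rcases Finset.mem_union.1 hw with h' | h'
    · exact (mem_SF0.1 h').1
    · exact (mem_SF1e.1 h').1
  have hv' : v ∈ FlatCat n := by
    rcases Finset.mem_union.1 hv with h' | h'
    · exact (mem_SF0.1 h').1
    · exact (mem_SF1e.1 h').1
  exact (extw_inj hw' hv' h).1

-- main classification for SF0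
lemma SF0_succ (n k : ℕ) (hn : 1 ≤ n) :
    SF0 (n+1) k =
      (SF0 n k).image (EU n) ∪ (SF0 n k).image (EH n) ∪ (SF1e n k).image (EU n) := by
  ext v
  simp only [Finset.mem_union, Finset.mem_image, mem_SF0, mem_SF1e]
  constructor
  · rintro ⟨hv, hvk, hvf⟩
    obtain ⟨hwmem, hveq, hc1, hc2⟩ := mem_flatCat_succ hn hv
    set w := trunc n v with hwdef
    rcases Nat.lt_trichotomy (v n) (w (n-1)) with hc | hc | hc
    · exfalso
      apply hvf
      rw [hveq]
      exact endFlag_ext_D hn hc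
    · -- H extension
      left; right
      refine ⟨w, ⟨hwmem, ?_, ?_⟩, ?_⟩
      · rw [hveq, hc] at hvk
        rwa [valleyCount_ext_le hn (le_refl _)] at hvk
      · intro hf
        apply hvf
        rw [hveq, hc]
        exact (endFlag_ext_H hn).2 hf
      · rw [hveq, hc]; rfl
    · -- U extension
      have hcu : v n = w (n-1) + 1 := by omega
      by_cases hf : EndFlag n w
      · right
        refine ⟨w, ⟨hwmem, ?_, hf⟩, ?_⟩
        · rw [hveq, hcu, valleyCount_ext_U hn, if_pos hf] at hvk
          omega
        · rw [hveq, hcu]; rfl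
      · left; left
        refine ⟨w, ⟨hwmem, ?_, hf⟩, ?_⟩
        · rw [hveq, hcu, valleyCount_ext_U hn, if_neg hf] at hvk
          omega
        · rw [hveq, hcu]; rfl
  · rintro ((⟨w, ⟨hw, hwk, hwf⟩, rfl⟩ | ⟨w, ⟨hw, hwk, hwf⟩, rfl⟩) | ⟨w, ⟨hw, hwk, hwf⟩, rfl⟩)
    · refine ⟨ext_mem_flatCat hn hw (by omega) (by omega), ?_, ?_⟩
      · rw [EU, valleyCount_ext_U hn, if_neg hwf, hwk, Nat.add_zero]
      · exact endFlag_ext_U hn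
    · refine ⟨ext_mem_flatCat hn hw (by omega) (by omega), ?_, ?_⟩
      · rw [EH, valleyCount_ext_le hn (le_refl _), hwk]
      · rw [EH]
        intro hf
        exact hwf ((endFlag_ext_H hn).1 hf)
    · refine ⟨ext_mem_flatCat hn hw (by omega) (by omega), ?_, ?_⟩
      · rw [EU, valleyCount_ext_U hn, if_pos hwf, hwk]
      · exact endFlag_ext_U hn

-- main classification for SF1
lemma SF1_succ (n k : ℕ) (hn : 1 ≤ n) :
    SF1 (n+1) k =
      (SF1 n k).image (EH n) ∪
        (SF01 n k).biUnion (fun w => (Finset.Ico (mstat n w) (w (n-1))).image (extw n w)) := by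
  ext v
  simp only [Finset.mem_union, Finset.mem_image, mem_SF1, Finset.mem_biUnion, mem_SF01,
    Finset.mem_Ico]
  constructor
  · rintro ⟨hv, hvk, hvf⟩
    obtain ⟨hwmem, hveq, hc1, hc2⟩ := mem_flatCat_succ hn hv
    set w := trunc n v with hwdef
    rcases Nat.lt_trichotomy (v n) (w (n-1)) with hc | hc | hc
    · right
      refine ⟨w, ⟨hwmem, ?_⟩, v n, ⟨hc2 hc, hc⟩, hveq.symm⟩
      rw [hveq] at hvk
      rwa [valleyCount_ext_le hn (by omega)] at hvk
    · left
      refine ⟨w, ⟨hwmem, ?_, ?_⟩, ?_⟩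
      · rw [hveq, hc] at hvk
        rwa [valleyCount_ext_le hn (le_refl _)] at hvk
      · rw [hveq, hc] at hvf
        exact (endFlag_ext_H hn).1 hvf
      · rw [hveq, hc]; rfl
    · exfalso
      have hcu : v n = w (n-1) + 1 := by omega
      rw [hveq, hcu] at hvf
      exact endFlag_ext_U hn hvf
  · rintro (⟨w, ⟨hw, hwk, hwf⟩, rfl⟩ | ⟨w, ⟨hw, hwk⟩, c, ⟨hm, hc⟩, rfl⟩)
    · refine ⟨ext_mem_flatCat hn hw (by omega) (by omega), ?_, ?_⟩
      · rw [EH, valleyCount_ext_le hn (le_refl _), hwk]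
      · rw [EH]
        exact (endFlag_ext_H hn).2 hwf
    · refine ⟨ext_mem_flatCat hn hw (by omega) (fun _ => hm), ?_, ?_⟩
      · rw [valleyCount_ext_le hn (by omega), hwk]
      · exact endFlag_ext_D hn hc

end
end Aux4
section Aux5
open Classical Finset

lemma EU_ne_EH {n : ℕ} (hn : 1 ≤ n) (w v : ℕ → ℕ) : EU n w ≠ EH n v := by
  intro h
  have h1 := congrFun h n
  have h2 := congrFun h (n-1)
  unfold EU EH at h1 h2
  rw [ext_self, ext_self] at h1
  rw [ext_lt (by omega), ext_lt (by omega)] at h2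
  omega

lemma EH_ne_D {n : ℕ} (hn : 1 ≤ n) (w v : ℕ → ℕ) {c : ℕ} (hc : c < v (n-1)) :
    EH n w ≠ extw n v c := by
  intro h
  have h1 := congrFun h n
  have h2 := congrFun h (n-1)
  unfold EH at h1 h2
  rw [ext_self, ext_self] at h1
  rw [ext_lt (by omega), ext_lt (by omega)] at h2
  omega

lemma image_EU_card {n : ℕ} {s : Finset (ℕ → ℕ)} (hs : ∀ w ∈ s, w ∈ FlatCat n) :
    (s.image (EU n)).card = s.card :=
  Finset.card_image_of_injOn (fun w hw v hv h =>
    (extw_inj (hs w hw) (hs v hv) (by unfold EU at h; exact h)).1)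

lemma image_EH_card {n : ℕ} {s : Finset (ℕ → ℕ)} (hs : ∀ w ∈ s, w ∈ FlatCat n) :
    (s.image (EH n)).card = s.card :=
  Finset.card_image_of_injOn (fun w hw v hv h =>
    (extw_inj (hs w hw) (hs v hv) (by unfold EH at h; exact h)).1)

lemma disj_EU_EU {n k : ℕ} : Disjoint ((SF0 n k).image (EU n)) ((SF1e n k).image (EU n)) := by
  rw [Finset.disjoint_left]
  rintro a ha hb
  obtain ⟨w, hw, rfl⟩ := Finset.mem_image.1 ha
  obtain ⟨v, hv, heq⟩ := Finset.mem_image.1 hb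
  have hw' := mem_SF0.1 hw
  have hv' := mem_SF1e.1 hv
  have hvw : v = w := (extw_inj hv'.1 hw'.1 (by unfold EU at heq; exact heq)).1
  rw [hvw] at hv'
  exact hw'.2.2 hv'.2.2

lemma disj0 {n k : ℕ} (hn : 1 ≤ n) :
    Disjoint ((SF0 n k).image (EU n)) ((SF0 n k).image (EH n)) := by
  rw [Finset.disjoint_left]
  rintro a ha hb
  obtain ⟨w, hw, rfl⟩ := Finset.mem_image.1 ha
  obtain ⟨v, hv, heq⟩ := Finset.mem_image.1 hb
  exact EU_ne_EH hn w v heq.symm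

lemma disj1 {n k : ℕ} (hn : 1 ≤ n) :
    Disjoint ((SF0 n k).image (EU n) ∪ (SF0 n k).image (EH n)) ((SF1e n k).image (EU n)) := by
  rw [Finset.disjoint_union_left]
  refine ⟨disj_EU_EU, ?_⟩
  rw [Finset.disjoint_left]
  rintro a ha hb
  obtain ⟨w, hw, rfl⟩ := Finset.mem_image.1 ha
  obtain ⟨v, hv, heq⟩ := Finset.mem_image.1 hb
  exact EU_ne_EH hn v w heq

lemma SF0_card_succ (n k : ℕ) (hn : 1 ≤ n) :
    (SF0 (n+1) k).card = 2 * (SF0 n k).card + (SF1e n k).card := by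
  have hflat0 : ∀ w ∈ SF0 n k, w ∈ FlatCat n := fun w hw => (mem_SF0.1 hw).1
  have hflat1 : ∀ w ∈ SF1e n k, w ∈ FlatCat n := fun w hw => (mem_SF1e.1 hw).1
  rw [SF0_succ n k hn, Finset.card_union_of_disjoint (disj1 hn),
    Finset.card_union_of_disjoint (disj0 hn),
    image_EU_card hflat0, image_EH_card hflat0, image_EU_card hflat1]
  omega

lemma sum_jstat_EU {n : ℕ} (hn : 1 ≤ n) {s : Finset (ℕ → ℕ)} (hs : ∀ w ∈ s, w ∈ FlatCat n) :
    ∑ v ∈ s.image (EU n), jstat (n+1) v = (∑ w ∈ s, jstat n w) + s.card := by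
  rw [Finset.sum_image (fun w hw v hv h =>
    (extw_inj (hs w hw) (hs v hv) (by unfold EU at h; exact h)).1)]
  rw [Finset.sum_congr rfl (fun w hw => by
    show jstat (n+1) (extw n w (w (n-1) + 1)) = jstat n w + 1
    exact jstat_ext_U hn (hs w hw))]
  rw [Finset.sum_add_distrib, Finset.sum_const, smul_eq_mul, mul_one]

lemma sum_jstat_EH {n : ℕ} (hn : 1 ≤ n) {s : Finset (ℕ → ℕ)} (hs : ∀ w ∈ s, w ∈ FlatCat n) :
    ∑ v ∈ s.image (EH n), jstat (n+1) v = ∑ w ∈ s, jstat n w := by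
  rw [Finset.sum_image (fun w hw v hv h =>
    (extw_inj (hs w hw) (hs v hv) (by unfold EH at h; exact h)).1)]
  exact Finset.sum_congr rfl (fun w hw => jstat_ext_H hn)

lemma SF0_sum_succ (n k : ℕ) (hn : 1 ≤ n) :
    ∑ v ∈ SF0 (n+1) k, jstat (n+1) v =
      2 * (∑ w ∈ SF0 n k, jstat n w) + (SF0 n k).card + (SF1e n k).card := by
  have hflat0 : ∀ w ∈ SF0 n k, w ∈ FlatCat n := fun w hw => (mem_SF0.1 hw).1
  have hflat1 : ∀ w ∈ SF1e n k, w ∈ FlatCat n := fun w hw => (mem_SF1e.1 hw).1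
  rw [SF0_succ n k hn, Finset.sum_union (disj1 hn), Finset.sum_union (disj0 hn),
    sum_jstat_EU hn hflat0, sum_jstat_EH hn hflat0, sum_jstat_EU hn hflat1]
  have hz : ∑ w ∈ SF1e n k, jstat n w = 0 := by
    apply Finset.sum_eq_zero
    intro w hw
    have hw' := mem_SF1e.1 hw
    exact jstat_eq_zero_of_endFlag hn hw'.1 hw'.2.2
  rw [hz]
  omega

lemma SF1_card_succ (n k : ℕ) (hn : 1 ≤ n) :
    (SF1 (n+1) k).card = (SF1 n k).card + ∑ w ∈ SF01 n k, jstat n w := by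
  have hflat1 : ∀ w ∈ SF1 n k, w ∈ FlatCat n := fun w hw => (mem_SF1.1 hw).1
  have hflat01 : ∀ w ∈ SF01 n k, w ∈ FlatCat n := fun w hw => (mem_SF01.1 hw).1
  have hdisj : Disjoint ((SF1 n k).image (EH n))
      ((SF01 n k).biUnion (fun w => (Finset.Ico (mstat n w) (w (n-1))).image (extw n w))) := by
    rw [Finset.disjoint_left]
    rintro a ha hb
    obtain ⟨w, hw, rfl⟩ := Finset.mem_image.1 ha
    obtain ⟨v, hv, hb'⟩ := Finset.mem_biUnion.1 hb
    obtain ⟨c, hc, heq⟩ := Finset.mem_image.1 hb'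
    rw [Finset.mem_Ico] at hc
    exact EH_ne_D hn w v hc.2 heq.symm
  rw [SF1_succ n k hn, Finset.card_union_of_disjoint hdisj, image_EH_card hflat1]
  congr 1
  rw [Finset.card_biUnion]
  · apply Finset.sum_congr rfl
    intro w hw
    rw [Finset.card_image_of_injOn (fun c hc d hd h => by
      have := congrFun h n
      rwa [ext_self, ext_self] at this)]
    rw [Nat.card_Ico]
    rfl
  · intro w hw v hv hne
    rw [Function.onFun, Finset.disjoint_left]
    rintro a ha hb
    obtain ⟨c, hc, rfl⟩ := Finset.mem_image.1 ha
    obtain ⟨d, hd, heq⟩ := Finset.mem_image.1 hb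
    exact hne (extw_inj (hflat01 w hw) (hflat01 v hv) heq.symm).1

end Aux5
section Aux6
open Classical Finset

lemma flatCat_one : FlatCat 1 = {fun _ => 0} := by
  ext w
  simp only [Set.mem_singleton_iff]
  constructor
  · intro hw
    funext i
    rcases Nat.eq_zero_or_pos i with rfl | hi
    · exact hw.1.1
    · exact hw.1.2.2 i hi
  · rintro rfl
    exact ⟨⟨rfl, fun i hi => absurd hi (by omega), fun i _ => rfl⟩,
      fun i j _ _ _ => Nat.le_refl 0⟩

lemma valleyCount_one (w : ℕ → ℕ) : valleyCount 1 w = 0 := by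
  unfold valleyCount
  rw [show {p : ℕ × ℕ | 1 ≤ p.2 ∧ IsLValley 1 w p.2 p.1} = ∅ from ?_, Set.ncard_empty]
  rw [Set.eq_empty_iff_forall_notMem]
  rintro ⟨i, l⟩ ⟨-, h, -⟩
  omega

lemma endFlag_one (w : ℕ → ℕ) : ¬ EndFlag 1 w := by
  rintro ⟨i, hi, -, -⟩
  omega

lemma jstat_one (w : ℕ → ℕ) (h : w ∈ FlatCat 1) : jstat 1 w = 0 := by
  unfold jstat
  rw [show (1:ℕ)-1 = 0 from rfl, h.1.1]
  omega

lemma SF0_one_zero : SF0 1 0 = {fun _ => 0} := by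
  ext w
  rw [mem_SF0, Finset.mem_singleton]
  constructor
  · rintro ⟨h, -, -⟩
    rw [flatCat_one] at h
    exact h
  · rintro rfl
    refine ⟨by rw [flatCat_one]; rfl, valleyCount_one _, endFlag_one _⟩

lemma SF0_one_succ (k : ℕ) : SF0 1 (k+1) = ∅ := by
  ext w
  simp only [Finset.notMem_empty, iff_false, mem_SF0]
  rintro ⟨-, h, -⟩
  rw [valleyCount_one] at h
  omega

lemma SF1_one (k : ℕ) : SF1 1 k = ∅ := by
  ext w
  simp only [Finset.notMem_empty, iff_false, mem_SF1]
  rintro ⟨-, -, h⟩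
  exact endFlag_one w h

-- arithmetic lemmas
lemma arith1 (n : ℕ) (hn : 1 ≤ n) :
    2 * (2^(n-2) * Nat.choose (n-1) 1) + 2^(n-1) = 2^(n-1) * Nat.choose n 1 := by
  rcases Nat.lt_or_ge n 2 with h | h
  · have : n = 1 := by omega
    subst this
    norm_num
  · obtain ⟨m, rfl⟩ : ∃ m, n = m + 2 := ⟨n - 2, by omega⟩
    rw [show m+2-2 = m from by omega, show m+2-1 = m+1 from by omega,
      Nat.choose_one_right, Nat.choose_one_right, pow_succ]
    ring

lemma arith2 (n k : ℕ) :
    2 * (2^(n-2*k-4) * Nat.choose (n-1) (2*k+3)) + 2^(n-2*k-3) * Nat.choose (n-1) (2*k+2)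
      = 2^(n-2*k-3) * Nat.choose n (2*k+3) := by
  rcases Nat.lt_or_ge n (2*k+3) with h | h
  · rw [Nat.choose_eq_zero_of_lt (by omega : n-1 < 2*k+3),
      Nat.choose_eq_zero_of_lt (by omega : n-1 < 2*k+2),
      Nat.choose_eq_zero_of_lt (by omega : n < 2*k+3)]
    ring
  rcases Nat.eq_or_lt_of_le h with heq | h'
  · obtain rfl : n = 2*k+3 := heq.symm
    rw [show 2*k+3-2*k-4 = 0 from by omega, show 2*k+3-2*k-3 = 0 from by omega,
      show 2*k+3-1 = 2*k+2 from by omega,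
      Nat.choose_eq_zero_of_lt (by omega : 2*k+2 < 2*k+3),
      Nat.choose_self, Nat.choose_self]
    ring
  · obtain ⟨m, rfl⟩ : ∃ m, n = m + (2*k+4) := ⟨n - (2*k+4), by omega⟩
    rw [show m+(2*k+4)-2*k-4 = m from by omega,
      show m+(2*k+4)-2*k-3 = m+1 from by omega,
      show m+(2*k+4)-1 = m+2*k+3 from by omega]
    have hp := Nat.choose_succ_succ' (m+2*k+3) (2*k+2)
    rw [show m+2*k+3+1 = m+(2*k+4) from by omega, show 2*k+2+1 = 2*k+3 from by omega] at hp
    rw [hp, pow_succ]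
    ring

lemma arith3 (n k : ℕ) :
    2 * (2^(n-2*k-3) * Nat.choose (n-1) (2*k+2)) + 2^(n-2*k-2) * Nat.choose (n-1) (2*k+1)
      = 2^(n-2*k-2) * Nat.choose n (2*k+2) := by
  rcases Nat.lt_or_ge n (2*k+2) with h | h
  · rw [Nat.choose_eq_zero_of_lt (by omega : n-1 < 2*k+2),
      Nat.choose_eq_zero_of_lt (by omega : n-1 < 2*k+1),
      Nat.choose_eq_zero_of_lt (by omega : n < 2*k+2)]
    ring
  rcases Nat.eq_or_lt_of_le h with heq | h'
  · obtain rfl : n = 2*k+2 := heq.symm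
    rw [show 2*k+2-2*k-3 = 0 from by omega, show 2*k+2-2*k-2 = 0 from by omega,
      show 2*k+2-1 = 2*k+1 from by omega,
      Nat.choose_eq_zero_of_lt (by omega : 2*k+1 < 2*k+2),
      Nat.choose_self, Nat.choose_self]
    ring
  · obtain ⟨m, rfl⟩ : ∃ m, n = m + (2*k+3) := ⟨n - (2*k+3), by omega⟩
    rw [show m+(2*k+3)-2*k-3 = m from by omega,
      show m+(2*k+3)-2*k-2 = m+1 from by omega,
      show m+(2*k+3)-1 = m+2*k+2 from by omega]
    have hp := Nat.choose_succ_succ' (m+2*k+2) (2*k+1)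
    rw [show m+2*k+2+1 = m+(2*k+3) from by omega, show 2*k+1+1 = 2*k+2 from by omega] at hp
    rw [hp, pow_succ]
    ring

end Aux6
section Aux7
open Classical Finset

lemma arithJ2 (n A1 C : ℕ) (hn : 1 ≤ n)
    (hA1 : 2^(n-1) + A1 = if n = 1 then 1 else (n-1)*2^(n-2)+1)
    (hC : C = 2*2^(n-1) + 0 + (A1 + 2^(n-2)*Nat.choose (n-1) 1)) :
    C = n*2^(n-1)+1 := by
  rcases Nat.lt_or_ge n 2 with h2 | h2
  · have hn1 : n = 1 := by omega
    subst hn1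
    norm_num at hA1 hC
    omega
  · obtain ⟨m, rfl⟩ : ∃ m, n = m + 2 := ⟨n-2, by omega⟩
    rw [if_neg (by omega), show m+2-1 = m+1 from by omega,
      show m+2-2 = m from by omega] at hA1
    rw [show m+2-1 = m+1 from by omega, show m+2-2 = m from by omega,
      Nat.choose_one_right] at hC
    have hp : (2:ℕ)^(m+1) = 2*2^m := by rw [pow_succ]; ring
    have h2' : 2*((m+1)*2^m) = (m+1)*2^(m+1) := by rw [pow_succ]; ring
    have h3 : (m+2)*2^(m+1) = 2^(m+1) + (m+1)*2^(m+1) := by ring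
    have h4 : 2^m*(m+1) = (m+1)*2^m := by ring
    rw [show m+2-1 = m+1 from by omega]
    linarith

lemma invariants (n : ℕ) (hn : 1 ≤ n) :
    (SF0 n 0).card = 2^(n-1) ∧
    ((SF01 n 0).card = if n = 1 then 1 else (n-1)*2^(n-2)+1) ∧
    (∀ k, ∑ w ∈ SF0 n k, jstat n w = 2^(n-2*k-2) * Nat.choose (n-1) (2*k+1)) ∧
    (∀ k, (SF0 n (k+1)).card + (SF1 n k).card = 2^(n-2*k-3) * Nat.choose (n-1) (2*k+2)) ∧
    (∀ k, (SF01 n (k+1)).card = ∑ w ∈ SF0 n (k+1), jstat n w) := by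
  induction n, hn using Nat.le_induction with
  | base =>
    have h1 : (SF0 1 0).card = 1 := by rw [SF0_one_zero]; exact Finset.card_singleton _
    refine ⟨by simp [h1], ?_, ?_, ?_, ?_⟩
    · rw [if_pos rfl, SF01_card, SF1_one, Finset.card_empty, h1]
    · intro k
      rw [Nat.choose_eq_zero_of_lt (by omega : 1-1 < 2*k+1), Nat.mul_zero]
      apply Finset.sum_eq_zero
      intro w hw
      exact jstat_one w (mem_SF0.1 hw).1
    · intro k
      rw [SF0_one_succ, SF1_one, Nat.choose_eq_zero_of_lt (by omega : 1-1 < 2*k+2)]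
      simp
    · intro k
      rw [SF01_card, SF0_one_succ, SF1_one, Finset.sum_empty]
      simp
  | succ n hn IH =>
    obtain ⟨J1, J2, J3, J4, J5⟩ := IH
    have N1 : (SF0 (n+1) 0).card = 2^((n+1)-1) := by
      rw [SF0_card_succ n 0 hn, SF1e_zero, Finset.card_empty, J1, Nat.add_sub_cancel]
      conv_rhs => rw [show n = (n-1)+1 from by omega]
      rw [pow_succ]
      omega
    refine ⟨N1, ?_, ?_, ?_, ?_⟩
    · -- J2
      rw [if_neg (by omega), Nat.add_sub_cancel, show (n+1)-2 = n-1 from by omega]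
      have hA1 : 2^(n-1) + (SF1 n 0).card = if n = 1 then 1 else (n-1)*2^(n-2)+1 := by
        rw [← J1, ← SF01_card]
        exact J2
      apply arithJ2 n (SF1 n 0).card _ hn hA1
      rw [SF01_card, SF0_card_succ n 0 hn, SF1_card_succ n 0 hn, SF1e_zero,
        Finset.card_empty, SF01_sum n 0 hn, J1]
      have h30 := J3 0
      rw [show n-2*0-2 = n-2 from by omega, show 2*0+1 = 1 from by omega] at h30
      rw [h30]
    · -- J3
      intro k
      rcases Nat.eq_zero_or_pos k with rfl | hk
      · rw [SF0_sum_succ n 0 hn, SF1e_zero, Finset.card_empty, J1]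
        have h30 := J3 0
        rw [show n-2*0-2 = n-2 from by omega, show 2*0+1 = 1 from by omega] at h30
        rw [h30, show (n+1)-2*0-2 = n-1 from by omega, show 2*0+1 = 1 from by omega,
          Nat.add_sub_cancel]
        have key := arith1 n hn
        omega
      · obtain ⟨k', rfl⟩ : ∃ k', k = k'+1 := ⟨k-1, by omega⟩
        rw [SF0_sum_succ n (k'+1) hn, SF1e_succ]
        have h3 := J3 (k'+1)
        rw [show n-2*(k'+1)-2 = n-2*k'-4 from by omega,
          show 2*(k'+1)+1 = 2*k'+3 from by omega] at h3
        have h4 := J4 k'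
        have key := arith2 n k'
        rw [show (n+1)-2*(k'+1)-2 = n-2*k'-3 from by omega,
          show 2*(k'+1)+1 = 2*k'+3 from by omega, Nat.add_sub_cancel]
        linarith
    · -- J4
      intro k
      rw [SF0_card_succ n (k+1) hn, SF1e_succ, SF1_card_succ n k hn, SF01_sum n k hn]
      have h4 := J4 k
      have h3 := J3 k
      have key := arith3 n k
      rw [show (n+1)-2*k-3 = n-2*k-2 from by omega, Nat.add_sub_cancel]
      linarith
    · -- J5
      intro k
      rw [SF01_card, SF0_card_succ n (k+1) hn, SF1e_succ, SF1_card_succ n (k+1) hn,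
        SF01_sum n (k+1) hn, SF0_sum_succ n (k+1) hn, SF1e_succ]
      have h5 := J5 k
      have hh := SF01_card n (k+1)
      omega

lemma setOf_eq_coe (n k : ℕ) :
    {w ∈ FlatCat n | valleyCount n w = k} = ↑(SF01 n k) := by
  ext w
  simp only [Set.mem_setOf_eq, Finset.mem_coe, mem_SF01]

end Aux7

/-- Counting flattened Catalan words of length `n` by their number of valleys:
no valley gives `(n-1)·2^(n-2) + 1` words for `n ≥ 2` (and `1` word for `n = 1`);
exactly `k ≥ 1` valleys gives `2^(n - 2k - 2) · C(n-1, 2k+1)` words when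
`n ≥ 2k + 2`, and `0` words when `n < 2k + 2`. -/
theorem flatCat_valleyCount_card (n : ℕ) (hn : 1 ≤ n) :
    (2 ≤ n → {w ∈ FlatCat n | valleyCount n w = 0}.ncard =
      (n - 1) * 2 ^ (n - 2) + 1) ∧
    (n = 1 → {w ∈ FlatCat n | valleyCount n w = 0}.ncard = 1) ∧
    (∀ k, 1 ≤ k → 2 * k + 2 ≤ n →
      {w ∈ FlatCat n | valleyCount n w = k}.ncard =
        2 ^ (n - (2 * k + 2)) * Nat.choose (n - 1) (2 * k + 1)) ∧
    (∀ k, 1 ≤ k → n < 2 * k + 2 →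
      {w ∈ FlatCat n | valleyCount n w = k}.ncard = 0) := by
  obtain ⟨J1, J2, J3, J4, J5⟩ := invariants n hn
  have hset : ∀ k, {w ∈ FlatCat n | valleyCount n w = k}.ncard = (SF01 n k).card := by
    intro k
    rw [setOf_eq_coe, Set.ncard_coe_finset]
  refine ⟨?_, ?_, ?_, ?_⟩
  · intro h2
    rw [hset 0, J2, if_neg (by omega)]
  · intro h1
    rw [hset 0, J2, if_pos h1]
  · intro k hk hkn
    obtain ⟨k', rfl⟩ : ∃ k', k = k'+1 := ⟨k-1, by omega⟩
    rw [hset, J5 k', J3 (k'+1), show n-2*(k'+1)-2 = n - (2*(k'+1)+2) from by omega]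
  · intro k hk hkn
    obtain ⟨k', rfl⟩ : ∃ k', k = k'+1 := ⟨k-1, by omega⟩
    rw [hset, J5 k', J3 (k'+1),
      Nat.choose_eq_zero_of_lt (by omega : n-1 < 2*(k'+1)+1), Nat.mul_zero]
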